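/- arXiv:0802.1082 — 2 statements merged into one kernel-verified Lean document; each statement's English description precedes it below -/
import Mathlib

section
/- Let r, r' be nonproportional vectors of norm 3 in a Hermitian ℂ-vector space, and let R, R' be the ω-reflections in r and r' (x ↦ x + (ω-1)⟨x,r⟩r/3, etc.). Then R and R' satisfy the braid relation RR'R = R'RR' if and only if |⟨r,r'⟩|² = 3, and they commute if and only if ⟨r,r'⟩ = 0. -/
noncomputable section

def ω : ℂ := -1/2 + (Real.sqrt 3 / 2) * Complex.I

lemma homega : ω^2 + ω + 1 = 0 := by
  have hs : ((Real.sqrt 3 : ℝ) : ℂ)^2 = 3 := by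
    norm_cast
    exact Real.sq_sqrt (by norm_num)
  simp only [ω]
  linear_combination (3/4) * Complex.I_sq + (Complex.I^2/4) * hs

lemma homega1 : ω ≠ 1 := by
  simp only [ω, ne_eq, Complex.ext_iff]
  norm_num

lemma homega0 : ω ≠ 0 := by
  simp only [ω, ne_eq, Complex.ext_iff]
  norm_num

/-- For nonproportional norm-3 vectors `r, r'` in a complex Hermitian (inner product)
space, the `ω`-reflections in `r` and `r'` braid iff `|⟨r,r'⟩|² = 3` and commute iff
`⟨r,r'⟩ = 0`.  (Mathlib's inner product is linear in the second variable, so the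
paper's `⟨x,r⟩`, linear in `x`, is `inner r x` here.) -/
theorem stmt3 {V : Type*} [NormedAddCommGroup V] [InnerProductSpace ℂ V]
    (r r' : V)
    (h3 : (inner ℂ r r : ℂ) = 3) (h3' : (inner ℂ r' r' : ℂ) = 3)
    (hnp : ∀ c : ℂ, r' ≠ c • r)
    (R R' : V → V)
    (hR : ∀ x, R x = x + ((ω - 1) * ((inner ℂ r x : ℂ) / 3)) • r)
    (hR' : ∀ x, R' x = x + ((ω - 1) * ((inner ℂ r' x : ℂ) / 3)) • r') :
    ((∀ x, R (R' (R x)) = R' (R (R' x))) ↔ ‖(inner ℂ r r' : ℂ)‖ ^ 2 = 3) ∧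
    ((∀ x, R (R' x) = R' (R x)) ↔ (inner ℂ r r' : ℂ) = 0) := by
  have hw := homega
  have hw1 : ω - 1 ≠ 0 := sub_ne_zero.mpr homega1
  have hr0 : r ≠ 0 := by
    intro h
    rw [h, inner_zero_left] at h3
    exact (by norm_num : (0:ℂ) ≠ 3) h3
  have hindep : ∀ c d : ℂ, c • r + d • r' = 0 → c = 0 ∧ d = 0 := by
    intro c d h
    by_cases hd : d = 0
    · subst hd
      rw [zero_smul, add_zero, smul_eq_zero] at h
      exact ⟨h.resolve_right hr0, rfl⟩
    · exfalso
      apply hnp (d⁻¹ * (-c))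
      have h' : d • r' = (-c) • r := by
        rw [neg_smul]
        exact eq_neg_of_add_eq_zero_right h
      calc r' = (d⁻¹ * d) • r' := by rw [inv_mul_cancel₀ hd, one_smul]
        _ = d⁻¹ • (d • r') := by rw [mul_smul]
        _ = d⁻¹ • ((-c) • r) := by rw [h']
        _ = (d⁻¹ * (-c)) • r := by rw [mul_smul]
  have hconj : (inner ℂ r' r : ℂ) = starRingEnd ℂ (inner ℂ r r' : ℂ) :=
    (inner_conj_symm r' r).symm
  have key1 : ∀ x, R (R' (R x)) - R' (R (R' x)) =
      ((ω-1)*ω/3 * (1 - (inner ℂ r r' : ℂ) * (inner ℂ r' r : ℂ)/3) * (inner ℂ r x : ℂ)) • r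
      - ((ω-1)*ω/3 * (1 - (inner ℂ r r' : ℂ) * (inner ℂ r' r : ℂ)/3) * (inner ℂ r' x : ℂ)) • r' := by
    intro x
    simp only [hR, hR', inner_add_right, inner_smul_right, h3, h3']
    match_scalars
    · ring
    · linear_combination ((ω-1) * (inner ℂ r x : ℂ) * (inner ℂ r' r : ℂ) * (inner ℂ r r' : ℂ) / 27) * hw
    · linear_combination (-(ω-1) * (inner ℂ r' x : ℂ) * (inner ℂ r' r : ℂ) * (inner ℂ r r' : ℂ) / 27) * hw
  have key2 : ∀ x, R (R' x) - R' (R x) =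
      ((ω-1)^2/9 * (inner ℂ r r' : ℂ) * (inner ℂ r' x : ℂ)) • r
      - ((ω-1)^2/9 * (inner ℂ r' r : ℂ) * (inner ℂ r x : ℂ)) • r' := by
    intro x
    simp only [hR, hR', inner_add_right, inner_smul_right]
    match_scalars <;> ring
  constructor
  · constructor
    · intro h
      have h1 := key1 r
      rw [sub_eq_zero.mpr (h r), h3] at h1
      have h2 := hindep ((ω-1)*ω/3 * (1 - (inner ℂ r r' : ℂ) * (inner ℂ r' r : ℂ)/3) * 3)
        (-((ω-1)*ω/3 * (1 - (inner ℂ r r' : ℂ) * (inner ℂ r' r : ℂ)/3) * (inner ℂ r' r : ℂ)))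
        (by rw [neg_smul, ← sub_eq_add_neg]; exact h1.symm)
      have h4 := h2.1
      have hmul : (ω-1)*ω ≠ 0 := mul_ne_zero hw1 homega0
      have hval : (inner ℂ r r' : ℂ) * (inner ℂ r' r : ℂ) = 3 := by
        field_simp at h4
        have h5 : (3 : ℂ) - (inner ℂ r r' : ℂ) * (inner ℂ r' r : ℂ) = 0 := by
          rw [mul_zero] at h4
          exact (mul_eq_zero.mp h4).resolve_left (by rw [mul_comm]; exact hmul)
        linear_combination -h5
      rw [hconj, Complex.mul_conj, ← Complex.sq_norm] at hval
      exact_mod_cast hval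
    · intro hab x
      have hac : (inner ℂ r r' : ℂ) * (inner ℂ r' r : ℂ) = 3 := by
        rw [hconj, Complex.mul_conj, ← Complex.sq_norm, hab]
        norm_num
      have h1 := key1 x
      rw [hac] at h1
      rw [← sub_eq_zero, h1]
      norm_num
  · constructor
    · intro h
      have h1 := key2 r
      rw [sub_eq_zero.mpr (h r), h3] at h1
      have h2 := hindep ((ω-1)^2/9 * (inner ℂ r r' : ℂ) * (inner ℂ r' r : ℂ))
        (-((ω-1)^2/9 * (inner ℂ r' r : ℂ) * 3))
        (by rw [neg_smul, ← sub_eq_add_neg]; exact h1.symm)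
      have h4 := neg_eq_zero.mp h2.2
      have hsq : ((ω-1)^2/9 : ℂ) ≠ 0 := by
        apply div_ne_zero (pow_ne_zero 2 hw1) (by norm_num)
      have h5 : (inner ℂ r' r : ℂ) = 0 := by
        rcases mul_eq_zero.mp h4 with h6 | h6
        · exact (mul_eq_zero.mp h6).resolve_left hsq
        · exact absurd h6 (by norm_num)
      rw [hconj, starRingEnd_apply, star_eq_zero] at h5
      exact h5
    · intro ha x
      have ha' : (inner ℂ r' r : ℂ) = 0 := by rw [hconj, ha, map_zero]
      have h1 := key2 x
      rw [ha, ha'] at h1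
      rw [← sub_eq_zero, h1]
      simp
end
end

section
/- The lattice D₄^E = {(x,x,y) ∈ E³ : x ≡ y mod θ} (with the standard Hermitian form on ℂ³) has exactly 24 vectors of norm 3, namely the unit scalar multiples of (ω^i, ω^i, 1) for i = 0,1,2 and of (0,0,θ). -/
noncomputable section
open Finset

def θ : ℂ := ω - (starRingEnd ℂ) ω
def Eis : Subring ℂ := Subring.closure {ω}

/-- The standard Hermitian form on `ℂ³`. -/
def herm3 (x y : Fin 3 → ℂ) : ℂ := ∑ i, x i * (starRingEnd ℂ) (y i)

/-- `D₄^E = {(x,x,y) ∈ Eis³ : x ≡ y mod θ}`. -/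
def D4 : Set (Fin 3 → ℂ) :=
  {x | (∀ i, x i ∈ Eis) ∧ x 0 = x 1 ∧ ∃ e ∈ Eis, x 0 - x 2 = θ * e}

/-- The six units of the Eisenstein integers. -/
def units6 : Set ℂ := {1, -1, ω, -ω, ω ^ 2, -ω ^ 2}

lemma hsq3 : (Real.sqrt 3 : ℝ) ^ 2 = 3 := Real.sq_sqrt (by norm_num)
lemma ωre : ω.re = -1/2 := by simp [ω]
lemma ωim : ω.im = Real.sqrt 3 / 2 := by simp [ω]
lemma hstarω : (starRingEnd ℂ) ω = -1 - ω := by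
  rw [Complex.ext_iff]
  simp [Complex.conj_re, Complex.conj_im, ωre, ωim]
  norm_num
lemma hω2 : ω ^ 2 = -1 - ω := by
  rw [Complex.ext_iff, pow_two]
  simp only [Complex.mul_re, Complex.mul_im, Complex.sub_re, Complex.sub_im,
    Complex.neg_re, Complex.neg_im, Complex.one_re, Complex.one_im, ωre, ωim]
  constructor <;> nlinarith [hsq3]
lemma hω3 : ω ^ 3 = 1 := by
  have h : ω^3 = ω * ω^2 := by ring
  rw [h, hω2]
  linear_combination (-1 : ℂ) * hω2
lemma hθ : θ = 1 + 2 * ω := by rw [θ, hstarω]; ring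
lemma coeff_inj {a b c d : ℤ} (h : (a : ℂ) + b * ω = c + d * ω) : a = c ∧ b = d := by
  have h3 : Real.sqrt 3 ≠ 0 := by positivity
  rw [Complex.ext_iff] at h
  simp only [Complex.add_re, Complex.add_im, Complex.mul_re, Complex.mul_im,
    Complex.intCast_re, Complex.intCast_im, ωre, ωim] at h
  obtain ⟨h1, h2⟩ := h
  have hb : (b : ℝ) = d := by
    have : (b : ℝ) * (Real.sqrt 3 / 2) = d * (Real.sqrt 3 / 2) := by linarith
    have h3' : Real.sqrt 3 / 2 ≠ 0 := by positivity
    exact mul_right_cancel₀ h3' this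
  have hb' : b = d := by exact_mod_cast hb
  subst hb'
  refine ⟨?_, rfl⟩
  have : (a : ℝ) = c := by linarith
  exact_mod_cast this
lemma mem_Eis {z : ℂ} : z ∈ Eis ↔ ∃ a b : ℤ, z = (a : ℂ) + b * ω := by
  constructor
  · intro hz
    let S : Subring ℂ :=
      { carrier := {z | ∃ a b : ℤ, z = (a : ℂ) + b * ω}
        zero_mem' := ⟨0, 0, by push_cast; ring⟩
        one_mem' := ⟨1, 0, by push_cast; ring⟩
        add_mem' := by
          rintro x y ⟨a, b, rfl⟩ ⟨c, d, rfl⟩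
          exact ⟨a + c, b + d, by push_cast; ring⟩
        neg_mem' := by
          rintro x ⟨a, b, rfl⟩
          exact ⟨-a, -b, by push_cast; ring⟩
        mul_mem' := by
          rintro x y ⟨a, b, rfl⟩ ⟨c, d, rfl⟩
          refine ⟨a * c - b * d, a * d + b * c - b * d, ?_⟩
          push_cast
          linear_combination ((b : ℂ) * d) * hω2 }
    have : Eis ≤ S := Subring.closure_le.mpr (by
      rintro w rfl
      exact ⟨0, 1, by push_cast; ring⟩)
    exact this hz
  · rintro ⟨a, b, rfl⟩
    have hω : ω ∈ Eis := Subring.subset_closure rfl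
    exact add_mem (intCast_mem Eis a) (mul_mem (intCast_mem Eis b) hω)
lemma norm_rep (a b : ℤ) :
    ((a : ℂ) + b * ω) * (starRingEnd ℂ) ((a : ℂ) + b * ω) = ((a^2 - a*b + b^2 : ℤ) : ℂ) := by
  rw [map_add, map_mul, hstarω]
  have h1 : (starRingEnd ℂ) ((a : ℂ)) = a := by simp
  have h2 : (starRingEnd ℂ) ((b : ℂ)) = b := by simp
  rw [h1, h2]
  push_cast
  linear_combination (-(b:ℂ)^2) * hω2
lemma theta_mul (p q : ℤ) :
    θ * ((p : ℂ) + q * ω) = ((p - 2*q : ℤ) : ℂ) + ((2*p - q : ℤ) : ℂ) * ω := by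
  rw [hθ]; push_cast
  linear_combination (2*(q:ℂ)) * hω2
lemma norm_nonneg_int (a b : ℤ) : 0 ≤ a^2 - a*b + b^2 := by nlinarith [sq_nonneg (2*a - b), sq_nonneg b]
lemma norm_zero_int {a b : ℤ} (h : a^2 - a*b + b^2 = 0) : a = 0 ∧ b = 0 := by
  have hb : b = 0 := by nlinarith [sq_nonneg (2*a-b), sq_nonneg b]
  subst hb
  constructor
  · nlinarith [sq_nonneg a]
  · rfl
lemma norm_one_int {a b : ℤ} (h : a^2 - a*b + b^2 = 1) :
    (a = 1 ∧ b = 0) ∨ (a = -1 ∧ b = 0) ∨ (a = 0 ∧ b = 1) ∨ (a = 0 ∧ b = -1) ∨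
    (a = -1 ∧ b = -1) ∨ (a = 1 ∧ b = 1) := by
  have h4 : (2*a - b)^2 + 3*b^2 = 4 := by linear_combination 4*h
  have hb : -1 ≤ b ∧ b ≤ 1 := by constructor <;> nlinarith [sq_nonneg (2*a-b)]
  have ha : -1 ≤ a ∧ a ≤ 1 := by
    have h4' : (2*b - a)^2 + 3*a^2 = 4 := by linear_combination 4*h
    constructor <;> nlinarith [sq_nonneg (2*b-a)]
  obtain ⟨hb1, hb2⟩ := hb; obtain ⟨ha1, ha2⟩ := ha
  interval_cases a <;> interval_cases b <;> omega
lemma norm_three_int {a b : ℤ} (h : a^2 - a*b + b^2 = 3) :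
    (a = 1 ∧ b = 2) ∨ (a = -1 ∧ b = -2) ∨ (a = -2 ∧ b = -1) ∨ (a = 2 ∧ b = 1) ∨
    (a = 1 ∧ b = -1) ∨ (a = -1 ∧ b = 1) := by
  have h4 : (2*a - b)^2 + 3*b^2 = 12 := by linear_combination 4*h
  have hb : -2 ≤ b ∧ b ≤ 2 := by constructor <;> nlinarith [sq_nonneg (2*a-b)]
  have ha : -2 ≤ a ∧ a ≤ 2 := by
    have h4' : (2*b - a)^2 + 3*a^2 = 12 := by linear_combination 4*h
    constructor <;> nlinarith [sq_nonneg (2*b-a)]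
  obtain ⟨hb1, hb2⟩ := hb; obtain ⟨ha1, ha2⟩ := ha
  interval_cases a <;> interval_cases b <;> omega
lemma hωEis : ω ∈ Eis := Subring.subset_closure rfl
lemma hθEis : θ ∈ Eis := by
  rw [hθ]; exact add_mem (one_mem _) (mul_mem (by exact_mod_cast intCast_mem Eis 2) hωEis)
lemma unit_mem_Eis {u : ℂ} (hu : u ∈ units6) : u ∈ Eis := by
  rcases hu with rfl | rfl | rfl | rfl | rfl | rfl
  · exact one_mem _
  · exact neg_mem (one_mem _)
  · exact hωEis
  · exact neg_mem hωEis
  · exact pow_mem hωEis 2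
  · exact neg_mem (pow_mem hωEis 2)
lemma hωstarmul : ω * (starRingEnd ℂ) ω = 1 := by
  rw [hstarω]; linear_combination (-1 : ℂ) * hω2
lemma unit_norm {u : ℂ} (hu : u ∈ units6) : u * (starRingEnd ℂ) u = 1 := by
  rcases hu with rfl | rfl | rfl | rfl | rfl | rfl
  · simp
  · simp
  · exact hωstarmul
  · simp only [map_neg, mul_neg, neg_mul, neg_neg]; exact hωstarmul
  · rw [map_pow, ← mul_pow, hωstarmul]; norm_num
  · simp only [map_neg, mul_neg, neg_mul, neg_neg, map_pow]
    rw [← mul_pow, hωstarmul]; norm_num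
lemma theta_norm : θ * (starRingEnd ℂ) θ = 3 := by
  have : (starRingEnd ℂ) θ = -θ := by
    rw [hθ]; simp only [map_add, map_mul, map_one, hstarω]
    push_cast [map_ofNat]; ring
  rw [this, hθ]
  linear_combination (-4 : ℂ) * hω2
lemma unit_ne_zero {u : ℂ} (hu : u ∈ units6) : u ≠ 0 := by
  intro h
  have := unit_norm hu
  rw [h] at this; simp at this
lemma theta_ne_zero : θ ≠ 0 := by
  intro h
  have := theta_norm
  rw [h] at this
  simp at this
lemma su_mem {s : ℤ} (hs : s = 1 ∨ s = -1) (k : Fin 3) : (s : ℂ) * ω ^ (k : ℕ) ∈ units6 := by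
  rcases hs with rfl | rfl <;> fin_cases k <;>
    simp only [Int.cast_one, Int.cast_neg, one_mul, neg_mul, pow_zero, pow_one,
      Fin.isValue, Fin.val_zero, Fin.val_one, Fin.val_two, mul_one] <;>
    simp [units6]
lemma unit_classify {a b : ℤ} (h : a^2 - a*b + b^2 = 1) :
    ∃ s : ℤ, ∃ j : Fin 3, (s = 1 ∨ s = -1) ∧ ((a : ℂ) + b * ω = s * ω ^ (j : ℕ)) ∧
      (3 : ℤ) ∣ (a + b - s) := by
  rcases norm_one_int h with ⟨rfl, rfl⟩ | ⟨rfl, rfl⟩ | ⟨rfl, rfl⟩ | ⟨rfl, rfl⟩ | ⟨rfl, rfl⟩ | ⟨rfl, rfl⟩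
  · refine ⟨1, 0, Or.inl rfl, ?_, by decide⟩
    simp only [Fin.val_zero, pow_zero]; push_cast; ring
  · refine ⟨-1, 0, Or.inr rfl, ?_, by decide⟩
    simp only [Fin.val_zero, pow_zero]; push_cast; ring
  · refine ⟨1, 1, Or.inl rfl, ?_, by decide⟩
    simp only [Fin.val_one, pow_one]; push_cast; ring
  · refine ⟨-1, 1, Or.inr rfl, ?_, by decide⟩
    simp only [Fin.val_one, pow_one]; push_cast; ring
  · refine ⟨1, 2, Or.inl rfl, ?_, by decide⟩
    have h2 : ((2 : Fin 3) : ℕ) = 2 := rfl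
    rw [h2]; push_cast; linear_combination (-1:ℂ) * hω2
  · refine ⟨-1, 2, Or.inr rfl, ?_, by decide⟩
    have h2 : ((2 : Fin 3) : ℕ) = 2 := rfl
    rw [h2]; push_cast; linear_combination hω2
lemma three_classify {c d : ℤ} (h : c^2 - c*d + d^2 = 3) :
    ∃ u ∈ units6, (c : ℂ) + d * ω = u * θ := by
  rcases norm_three_int h with ⟨rfl, rfl⟩ | ⟨rfl, rfl⟩ | ⟨rfl, rfl⟩ | ⟨rfl, rfl⟩ | ⟨rfl, rfl⟩ | ⟨rfl, rfl⟩
  · exact ⟨1, by simp [units6], by rw [hθ]; push_cast; ring⟩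
  · exact ⟨-1, by simp [units6], by rw [hθ]; push_cast; ring⟩
  · exact ⟨ω, by simp [units6], by rw [hθ]; push_cast; linear_combination (-2:ℂ) * hω2⟩
  · exact ⟨-ω, by simp [units6], by rw [hθ]; push_cast; linear_combination (2:ℂ) * hω2⟩
  · exact ⟨ω^2, by simp [units6], by rw [hθ]; push_cast; linear_combination (-2*ω + 1) * hω2⟩
  · exact ⟨-ω^2, by simp [units6], by rw [hθ]; push_cast; linear_combination (2*ω - 1) * hω2⟩
lemma pow_fin_exists (j k : Fin 3) : ∃ i : Fin 3, ω ^ (j : ℕ) = ω ^ (k : ℕ) * ω ^ (i : ℕ) := by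
  fin_cases j <;> fin_cases k
  · exact ⟨0, by norm_num⟩
  · exact ⟨2, by show (1:ℂ) = ω ^ 1 * ω ^ 2; linear_combination (-1:ℂ) * hω3⟩
  · exact ⟨1, by show (1:ℂ) = ω ^ 2 * ω ^ 1; linear_combination (-1:ℂ) * hω3⟩
  · exact ⟨1, by show (ω:ℂ) ^ 1 = ω ^ 0 * ω ^ 1; ring⟩
  · exact ⟨0, by show (ω:ℂ) ^ 1 = ω ^ 1 * ω ^ 0; ring⟩
  · exact ⟨2, by show (ω:ℂ) ^ 1 = ω ^ 2 * ω ^ 2; linear_combination (-ω) * hω3⟩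
  · exact ⟨2, by show (ω:ℂ) ^ 2 = ω ^ 0 * ω ^ 2; ring⟩
  · exact ⟨1, by show (ω:ℂ) ^ 2 = ω ^ 1 * ω ^ 1; ring⟩
  · exact ⟨0, by show (ω:ℂ) ^ 2 = ω ^ 2 * ω ^ 0; ring⟩
lemma smul_vec_apply (u x y z : ℂ) :
    (u • ![x, y, z]) 0 = u * x ∧ (u • ![x, y, z]) 1 = u * y ∧ (u • ![x, y, z]) 2 = u * z := by
  refine ⟨?_, ?_, ?_⟩ <;> simp
lemma pow_sub_one (i : Fin 3) : ∃ e ∈ Eis, ω ^ (i : ℕ) - 1 = θ * e := by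
  fin_cases i
  · exact ⟨0, zero_mem _, by norm_num⟩
  · refine ⟨1 + ω, add_mem (one_mem _) hωEis, ?_⟩
    show ω ^ 1 - 1 = θ * (1 + ω)
    rw [hθ]; linear_combination (-2 : ℂ) * hω2
  · refine ⟨ω, hωEis, ?_⟩
    show ω ^ 2 - 1 = θ * ω
    rw [hθ]; linear_combination (-1 : ℂ) * hω2
lemma vec1_mem {u : ℂ} (hu : u ∈ units6) (i : Fin 3) :
    (u • ![ω ^ (i : ℕ), ω ^ (i : ℕ), 1]) ∈ D4 ∧
      herm3 (u • ![ω ^ (i : ℕ), ω ^ (i : ℕ), 1]) (u • ![ω ^ (i : ℕ), ω ^ (i : ℕ), 1]) = 3 := by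
  obtain ⟨e0, e1, e2⟩ := smul_vec_apply u (ω ^ (i : ℕ)) (ω ^ (i : ℕ)) 1
  have hωi : ω ^ (i : ℕ) * (starRingEnd ℂ) (ω ^ (i : ℕ)) = 1 := by
    rw [map_pow, ← mul_pow, hωstarmul, one_pow]
  constructor
  · refine ⟨?_, ?_, ?_⟩
    · intro j
      fin_cases j
      · show (u • ![ω ^ (i : ℕ), ω ^ (i : ℕ), 1]) 0 ∈ Eis
        rw [e0]; exact mul_mem (unit_mem_Eis hu) (pow_mem hωEis _)
      · show (u • ![ω ^ (i : ℕ), ω ^ (i : ℕ), 1]) 1 ∈ Eis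
        rw [e1]; exact mul_mem (unit_mem_Eis hu) (pow_mem hωEis _)
      · show (u • ![ω ^ (i : ℕ), ω ^ (i : ℕ), 1]) 2 ∈ Eis
        rw [e2]; exact mul_mem (unit_mem_Eis hu) (one_mem _)
    · rw [e0, e1]
    · obtain ⟨e, heE, he⟩ := pow_sub_one i
      refine ⟨u * e, mul_mem (unit_mem_Eis hu) heE, ?_⟩
      rw [e0, e2]
      linear_combination u * he
  · rw [herm3, Fin.sum_univ_three, e0, e1, e2]
    simp only [map_mul, map_one]
    have hA := unit_norm hu
    linear_combination (2 * (ω ^ (i:ℕ) * (starRingEnd ℂ) (ω ^ (i:ℕ))) + 1) * hA + 2 * hωi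
lemma vec2_mem {u : ℂ} (hu : u ∈ units6) :
    (u • ![0, 0, θ]) ∈ D4 ∧ herm3 (u • ![0, 0, θ]) (u • ![0, 0, θ]) = 3 := by
  obtain ⟨e0, e1, e2⟩ := smul_vec_apply u 0 0 θ
  constructor
  · refine ⟨?_, ?_, ?_⟩
    · intro j
      fin_cases j
      · show (u • ![0, 0, θ]) 0 ∈ Eis
        rw [e0, mul_zero]; exact zero_mem Eis
      · show (u • ![0, 0, θ]) 1 ∈ Eis
        rw [e1, mul_zero]; exact zero_mem Eis
      · show (u • ![0, 0, θ]) 2 ∈ Eis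
        rw [e2]; exact mul_mem (unit_mem_Eis hu) hθEis
    · rw [e0, e1]
    · refine ⟨-u, neg_mem (unit_mem_Eis hu), ?_⟩
      rw [e0, e2]; ring
  · rw [herm3, Fin.sum_univ_three, e0, e1, e2]
    simp only [map_mul, map_zero]
    have hA := unit_norm hu
    have hT := theta_norm
    linear_combination (θ * (starRingEnd ℂ) θ) * hA + hT
lemma vec_ext {x y : Fin 3 → ℂ} (h0 : x 0 = y 0) (h1 : x 1 = y 1) (h2 : x 2 = y 2) :
    x = y := by
  funext j; fin_cases j; exacts [h0, h1, h2]
lemma fwd {x : Fin 3 → ℂ} (hx : x ∈ D4) (hn : herm3 x x = 3) :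
    ∃ u ∈ units6,
      (∃ i : Fin 3, x = u • ![ω ^ (i : ℕ), ω ^ (i : ℕ), 1]) ∨ x = u • ![0, 0, θ] := by
  obtain ⟨hE, h01, e, heE, hsub⟩ := hx
  obtain ⟨a, b, h0⟩ := mem_Eis.mp (hE 0)
  obtain ⟨c, d, h2⟩ := mem_Eis.mp (hE 2)
  obtain ⟨p, q, he⟩ := mem_Eis.mp heE
  -- norm equation over ℤ
  rw [herm3, Fin.sum_univ_three, ← h01, h0, h2, norm_rep, norm_rep] at hn
  have hn' : (a^2 - a*b + b^2) + (a^2 - a*b + b^2) + (c^2 - c*d + d^2) = 3 := by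
    exact_mod_cast hn
  -- divisibility over ℤ
  rw [h0, h2, he, theta_mul] at hsub
  have hsub' : ((a - c : ℤ) : ℂ) + ((b - d : ℤ) : ℂ) * ω
      = ((p - 2*q : ℤ) : ℂ) + ((2*p - q : ℤ) : ℂ) * ω := by
    push_cast
    push_cast at hsub
    linear_combination hsub
  obtain ⟨hac, hbd⟩ := coeff_inj hsub'
  have hdvd : (3 : ℤ) ∣ (a + b) - (c + d) := ⟨p - q, by omega⟩
  have hnn1 := norm_nonneg_int a b
  have hnn2 := norm_nonneg_int c d
  set n1 := a^2 - a*b + b^2 with hdef1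
  set n2 := c^2 - c*d + d^2 with hdef2
  have hcase : (n1 = 0 ∧ n2 = 3) ∨ (n1 = 1 ∧ n2 = 1) := by omega
  rcases hcase with ⟨hz, h3⟩ | ⟨h1, h1'⟩
  · -- x 0 = 0, x 2 is a unit multiple of θ
    obtain ⟨ha0, hb0⟩ := norm_zero_int hz
    obtain ⟨u, hu, huθ⟩ := three_classify h3
    refine ⟨u, hu, Or.inr ?_⟩
    obtain ⟨e0, e1, e2⟩ := smul_vec_apply u 0 0 θ
    refine vec_ext ?_ ?_ ?_
    · rw [e0, h0, ha0, hb0]; push_cast; ring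
    · rw [e1, ← h01, h0, ha0, hb0]; push_cast; ring
    · rw [e2, h2, huθ]
  · -- both units
    obtain ⟨s1, j, hs1, hrep1, hd1⟩ := unit_classify h1
    obtain ⟨s2, k, hs2, hrep2, hd2⟩ := unit_classify h1'
    have hss : s1 = s2 := by
      rcases hs1 with rfl | rfl <;> rcases hs2 with rfl | rfl <;> omega
    subst hss
    obtain ⟨i, hpow⟩ := pow_fin_exists j k
    refine ⟨(s1 : ℂ) * ω ^ (k : ℕ), su_mem hs1 k, Or.inl ⟨i, ?_⟩⟩
    obtain ⟨e0, e1, e2⟩ := smul_vec_apply ((s1 : ℂ) * ω ^ (k : ℕ)) (ω ^ (i : ℕ)) (ω ^ (i : ℕ)) 1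
    refine vec_ext ?_ ?_ ?_
    · rw [e0, h0, hrep1, hpow]; ring
    · rw [e1, ← h01, h0, hrep1, hpow]; ring
    · rw [e2, h2, hrep2]; ring
def uList : Fin 6 → ℂ := fun s =>
  match s with
  | 0 => 1 | 1 => -1 | 2 => ω | 3 => -ω | 4 => ω ^ 2 | 5 => -ω ^ 2
def vList : Fin 4 → Fin 3 → ℂ := fun t =>
  match t with
  | 0 => ![1, 1, 1] | 1 => ![ω, ω, 1] | 2 => ![ω ^ 2, ω ^ 2, 1] | 3 => ![0, 0, θ]
def fmap : Fin 6 × Fin 4 → (Fin 3 → ℂ) := fun p => uList p.1 • vList p.2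
lemma uList_mem (s : Fin 6) : uList s ∈ units6 := by
  fin_cases s <;> simp [uList, units6]
def uP : Fin 6 → ℤ × ℤ := fun s =>
  match s with
  | 0 => (1, 0) | 1 => (-1, 0) | 2 => (0, 1) | 3 => (0, -1) | 4 => (-1, -1) | 5 => (1, 1)
lemma urep (s : Fin 6) : uList s = ((uP s).1 : ℂ) + ((uP s).2 : ℂ) * ω := by
  fin_cases s
  · show (1 : ℂ) = ((1 : ℤ) : ℂ) + ((0 : ℤ) : ℂ) * ω; push_cast; ring
  · show (-1 : ℂ) = ((-1 : ℤ) : ℂ) + ((0 : ℤ) : ℂ) * ω; push_cast; ring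
  · show ω = ((0 : ℤ) : ℂ) + ((1 : ℤ) : ℂ) * ω; push_cast; ring
  · show -ω = ((0 : ℤ) : ℂ) + ((-1 : ℤ) : ℂ) * ω; push_cast; ring
  · show ω ^ 2 = ((-1 : ℤ) : ℂ) + ((-1 : ℤ) : ℂ) * ω; push_cast; linear_combination hω2
  · show -ω ^ 2 = ((1 : ℤ) : ℂ) + ((1 : ℤ) : ℂ) * ω; push_cast; linear_combination (-1 : ℂ) * hω2
lemma uList_inj : Function.Injective uList := by
  intro s1 s2 h
  rw [urep s1, urep s2] at h
  obtain ⟨h1, h2⟩ := coeff_inj h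
  clear h
  revert h1 h2
  fin_cases s1 <;> fin_cases s2 <;> decide
lemma one_ne_ω : (1 : ℂ) ≠ ω := by
  intro h
  have := coeff_inj (a := 1) (b := 0) (c := 0) (d := 1) (by push_cast; linear_combination h)
  omega
lemma one_ne_ω2 : (1 : ℂ) ≠ ω ^ 2 := by
  intro h
  have := coeff_inj (a := 1) (b := 0) (c := -1) (d := -1)
    (by push_cast; linear_combination h + hω2)
  omega
lemma ω_ne_ω2 : ω ≠ ω ^ 2 := by
  intro h
  have := coeff_inj (a := 0) (b := 1) (c := -1) (d := -1)
    (by push_cast; linear_combination h + hω2)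
  omega
lemma cancel_unit {s : Fin 6} {x y : ℂ} (h : uList s * x = uList s * y) : x = y :=
  mul_left_cancel₀ (unit_ne_zero (uList_mem s)) h
lemma unit_ne_unit_mul_theta (s1 s2 : Fin 6) : uList s1 ≠ uList s2 * θ := by
  intro h
  have hA := unit_norm (uList_mem s1)
  rw [h, map_mul] at hA
  have hB := unit_norm (uList_mem s2)
  have hT := theta_norm
  have h31 : (3 : ℂ) = 1 := by
    linear_combination (-3 : ℂ) * hB + (-(uList s2 * (starRingEnd ℂ) (uList s2))) * hT + hA
  norm_num at h31
lemma fmap_inj : Function.Injective fmap := by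
  rintro ⟨s1, t1⟩ ⟨s2, t2⟩ h
  have h2 := congrFun h 2
  have h0 := congrFun h 0
  simp only [Prod.mk.injEq]
  fin_cases t1 <;> fin_cases t2
  · -- 0 0
    have h2' : uList s1 * (1 : ℂ) = uList s2 * 1 := h2
    simp only [mul_one] at h2'
    exact ⟨uList_inj h2', rfl⟩
  · -- 0 1
    have h2' : uList s1 * (1 : ℂ) = uList s2 * 1 := h2
    simp only [mul_one] at h2'
    obtain rfl : s1 = s2 := uList_inj h2'
    have h0' : uList s1 * (1 : ℂ) = uList s1 * ω := h0
    exact absurd (cancel_unit h0') one_ne_ω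
  · -- 0 2
    have h2' : uList s1 * (1 : ℂ) = uList s2 * 1 := h2
    simp only [mul_one] at h2'
    obtain rfl : s1 = s2 := uList_inj h2'
    have h0' : uList s1 * (1 : ℂ) = uList s1 * ω ^ 2 := h0
    exact absurd (cancel_unit h0') one_ne_ω2
  · -- 0 3
    have h2' : uList s1 * (1 : ℂ) = uList s2 * θ := h2
    rw [mul_one] at h2'
    exact absurd h2' (unit_ne_unit_mul_theta s1 s2)
  · -- 1 0
    have h2' : uList s1 * (1 : ℂ) = uList s2 * 1 := h2
    simp only [mul_one] at h2'
    obtain rfl : s1 = s2 := uList_inj h2'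
    have h0' : uList s1 * ω = uList s1 * 1 := h0
    exact absurd (cancel_unit h0').symm one_ne_ω
  · -- 1 1
    have h2' : uList s1 * (1 : ℂ) = uList s2 * 1 := h2
    simp only [mul_one] at h2'
    exact ⟨uList_inj h2', rfl⟩
  · -- 1 2
    have h2' : uList s1 * (1 : ℂ) = uList s2 * 1 := h2
    simp only [mul_one] at h2'
    obtain rfl : s1 = s2 := uList_inj h2'
    have h0' : uList s1 * ω = uList s1 * ω ^ 2 := h0
    exact absurd (cancel_unit h0') ω_ne_ω2
  · -- 1 3
    have h2' : uList s1 * (1 : ℂ) = uList s2 * θ := h2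
    rw [mul_one] at h2'
    exact absurd h2' (unit_ne_unit_mul_theta s1 s2)
  · -- 2 0
    have h2' : uList s1 * (1 : ℂ) = uList s2 * 1 := h2
    simp only [mul_one] at h2'
    obtain rfl : s1 = s2 := uList_inj h2'
    have h0' : uList s1 * ω ^ 2 = uList s1 * 1 := h0
    exact absurd (cancel_unit h0').symm one_ne_ω2
  · -- 2 1
    have h2' : uList s1 * (1 : ℂ) = uList s2 * 1 := h2
    simp only [mul_one] at h2'
    obtain rfl : s1 = s2 := uList_inj h2'
    have h0' : uList s1 * ω ^ 2 = uList s1 * ω := h0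
    exact absurd (cancel_unit h0').symm ω_ne_ω2
  · -- 2 2
    have h2' : uList s1 * (1 : ℂ) = uList s2 * 1 := h2
    simp only [mul_one] at h2'
    exact ⟨uList_inj h2', rfl⟩
  · -- 2 3
    have h2' : uList s1 * (1 : ℂ) = uList s2 * θ := h2
    rw [mul_one] at h2'
    exact absurd h2' (unit_ne_unit_mul_theta s1 s2)
  · -- 3 0
    have h2' : uList s1 * θ = uList s2 * 1 := h2
    rw [mul_one] at h2'
    exact absurd h2'.symm (unit_ne_unit_mul_theta s2 s1)
  · -- 3 1
    have h2' : uList s1 * θ = uList s2 * 1 := h2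
    rw [mul_one] at h2'
    exact absurd h2'.symm (unit_ne_unit_mul_theta s2 s1)
  · -- 3 2
    have h2' : uList s1 * θ = uList s2 * 1 := h2
    rw [mul_one] at h2'
    exact absurd h2'.symm (unit_ne_unit_mul_theta s2 s1)
  · -- 3 3
    have h2' : uList s1 * θ = uList s2 * θ := h2
    exact ⟨uList_inj (mul_right_cancel₀ theta_ne_zero h2'), rfl⟩
lemma v0eq : ![ω ^ (((0 : Fin 3) : ℕ)), ω ^ (((0 : Fin 3) : ℕ)), (1 : ℂ)] = vList 0 := by
  funext j; fin_cases j <;> simp [vList]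
lemma v1eq : ![ω ^ (((1 : Fin 3) : ℕ)), ω ^ (((1 : Fin 3) : ℕ)), (1 : ℂ)] = vList 1 := by
  funext j; fin_cases j <;> simp [vList]
lemma v2eq : ![ω ^ (((2 : Fin 3) : ℕ)), ω ^ (((2 : Fin 3) : ℕ)), (1 : ℂ)] = vList 2 := by
  funext j; fin_cases j <;> simp [vList]
lemma range_eq :
    {x : Fin 3 → ℂ | ∃ u ∈ units6,
        (∃ i : Fin 3, x = u • ![ω ^ (i : ℕ), ω ^ (i : ℕ), 1]) ∨ x = u • ![0, 0, θ]}
      = Set.range fmap := by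
  ext x
  constructor
  · rintro ⟨u, hu, h⟩
    obtain ⟨s, rfl⟩ : ∃ s, uList s = u := by
      rcases hu with rfl | rfl | rfl | rfl | rfl | rfl
      exacts [⟨0, rfl⟩, ⟨1, rfl⟩, ⟨2, rfl⟩, ⟨3, rfl⟩, ⟨4, rfl⟩, ⟨5, rfl⟩]
    rcases h with ⟨i, rfl⟩ | rfl
    · fin_cases i
      · exact ⟨(s, 0), by show uList s • vList 0 = _; rw [← v0eq]; rfl⟩
      · exact ⟨(s, 1), by show uList s • vList 1 = _; rw [← v1eq]; rfl⟩
      · exact ⟨(s, 2), by show uList s • vList 2 = _; rw [← v2eq]; rfl⟩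
    · exact ⟨(s, 3), rfl⟩
  · rintro ⟨⟨s, t⟩, rfl⟩
    refine ⟨uList s, uList_mem s, ?_⟩
    fin_cases t
    · exact Or.inl ⟨0, by show _ = uList s • ![ω ^ (((0:Fin 3):ℕ)), ω ^ (((0:Fin 3):ℕ)), 1]; rw [v0eq]; rfl⟩
    · exact Or.inl ⟨1, by show _ = uList s • ![ω ^ (((1:Fin 3):ℕ)), ω ^ (((1:Fin 3):ℕ)), 1]; rw [v1eq]; rfl⟩
    · exact Or.inl ⟨2, by show _ = uList s • ![ω ^ (((2:Fin 3):ℕ)), ω ^ (((2:Fin 3):ℕ)), 1]; rw [v2eq]; rfl⟩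
    · exact Or.inr rfl

/-- `D₄^E` has exactly 24 vectors of norm 3, namely the unit multiples of
`(ωⁱ,ωⁱ,1)` and of `(0,0,θ)`. -/
theorem stmt5 :
    {x | x ∈ D4 ∧ herm3 x x = 3} =
      {x | ∃ u ∈ units6,
        (∃ i : Fin 3, x = u • ![ω ^ (i : ℕ), ω ^ (i : ℕ), 1]) ∨ x = u • ![0, 0, θ]} ∧
    {x | x ∈ D4 ∧ herm3 x x = 3}.ncard = 24 := by
  have hset : {x | x ∈ D4 ∧ herm3 x x = 3} =
      {x | ∃ u ∈ units6,
        (∃ i : Fin 3, x = u • ![ω ^ (i : ℕ), ω ^ (i : ℕ), 1]) ∨ x = u • ![0, 0, θ]} := by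
    ext x
    constructor
    · rintro ⟨hx, hn⟩
      exact fwd hx hn
    · rintro ⟨u, hu, ⟨i, rfl⟩ | rfl⟩
      · exact vec1_mem hu i
      · exact vec2_mem hu
  refine ⟨hset, ?_⟩
  rw [hset, range_eq, ← Nat.card_coe_set_eq,
    Nat.card_range_of_injective fmap_inj, Nat.card_eq_fintype_card]
  simp
end
end
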